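/- arXiv:1807.06556 — 3 statements merged into one kernel-verified Lean document; each statement's English description precedes it below -/
import Mathlib

section
/- Let G be a finite bipartite multigraph (no loops) and let k ≥ 0 be an integer. A subgraph F of G is k-edge-colorable (i.e., its edges can be properly colored with at most k colors so that adjacent edges receive different colors) if and only if the maximum degree of F is at most k. -/
variable {V E : Type*}

/-- Degree of vertex `v` in the edge set `A` of a multigraph given by `ends`. -/
def degIn [DecidableEq V] (ends : E → Sym2 V) (A : Finset E) (v : V) : ℕ :=
  (A.filter (fun e => v ∈ ends e)).card

/-- The edge set `A` admits a proper edge coloring with at most `k` colors: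
adjacent (distinct, sharing an endpoint) edges get different colors. -/
def EdgeColorable (ends : E → Sym2 V) (A : Finset E) (k : ℕ) : Prop :=
  ∃ c : E → ℕ, (∀ e ∈ A, c e < k) ∧
    ∀ e₁ ∈ A, ∀ e₂ ∈ A, e₁ ≠ e₂ → (∃ v, v ∈ ends e₁ ∧ v ∈ ends e₂) → c e₁ ≠ c e₂

/-- `ν_k`: the maximum number of edges of a `k`-edge-colorable subgraph whose
edge set lies in `ground`. -/
noncomputable def nu (ends : E → Sym2 V) (ground : Finset E) (k : ℕ) : ℕ :=
  sSup {n | ∃ F : Finset E, F ⊆ ground ∧ EdgeColorable ends F k ∧ F.card = n}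

/-- The multigraph given by `ends` is bipartite. -/
def IsBipartite (ends : E → Sym2 V) : Prop :=
  ∃ f : V → Bool, ∀ e : E, ∀ u v : V, ends e = s(u, v) → f u ≠ f v

/-- There is an `A`-augmenting path: a simple path of odd length whose
odd-numbered (1st, 3rd, ...) edges lie outside `A`, whose even-numbered
(2nd, 4th, ...) edges belong to `A`, and whose endpoints have degree
at most `k - 1` in `A`. -/
def IsAugPath [DecidableEq V] (ends : E → Sym2 V) (A : Finset E) (k : ℕ) : Prop :=
  ∃ (m : ℕ) (vs : Fin (m + 1) → V) (es : Fin m → E),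
    Odd m ∧ Function.Injective vs ∧
    (∀ i : Fin m, ends (es i) = s(vs i.castSucc, vs i.succ)) ∧
    (∀ i : Fin m, (i : ℕ) % 2 = 0 → es i ∉ A) ∧
    (∀ i : Fin m, (i : ℕ) % 2 = 1 → es i ∈ A) ∧
    degIn ends A (vs 0) ≤ k - 1 ∧ degIn ends A (vs (Fin.last m)) ≤ k - 1

/-- Alternating reachability from `u` in the subgraph of `F'` whose edges are
colored `α` or `β` by `c`: edges alternate colors `β, α, β, α, ...`. -/
inductive AltReach (ends : E → Sym2 V) (c : E → ℕ) (F' : Finset E) (u : V) (α β : ℕ) :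
    V → ℕ → Prop
  | base : AltReach ends c F' u α β u 0
  | step {w w' : V} {n : ℕ} (e : E) : AltReach ends c F' u α β w n → e ∈ F' →
      c e = (if n % 2 = 0 then β else α) → ends e = s(w, w') →
      AltReach ends c F' u α β w' (n + 1)

lemma altReach_parity {ends : E → Sym2 V} {c : E → ℕ} {F' : Finset E} {u : V} {α β : ℕ}
    (f : V → Bool) (hf : ∀ e : E, ∀ x y : V, ends e = s(x, y) → f x ≠ f y)
    {w : V} {n : ℕ} (h : AltReach ends c F' u α β w n) : (f w = f u ↔ n % 2 = 0) := by
  induction h with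
  | base => simp
  | @step w w' n e _ _ _ hends ih =>
      have hxy := hf _ _ _ hends
      have h2 : (n + 1) % 2 = 0 ↔ ¬ (n % 2 = 0) := by omega
      rw [h2, ← ih]
      revert hxy
      cases f w <;> cases f w' <;> cases f u <;> simp

lemma altReach_closed {ends : E → Sym2 V} {c : E → ℕ} {F' : Finset E} {u : V} {α β : ℕ}
    (hloop : ∀ e : E, ¬ (ends e).IsDiag) (hab : α ≠ β)
    (hprop : ∀ e₁ ∈ F', ∀ e₂ ∈ F', e₁ ≠ e₂ → (∃ x, x ∈ ends e₁ ∧ x ∈ ends e₂) → c e₁ ≠ c e₂)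
    (hα : ∀ e' ∈ F', u ∈ ends e' → c e' ≠ α)
    {e : E} (he : e ∈ F') (hcol : c e = α ∨ c e = β)
    {w : V} {n : ℕ} (hw : AltReach ends c F' u α β w n) (hwe : w ∈ ends e) :
    ∀ x ∈ ends e, ∃ m, AltReach ends c F' u α β x m := by
  have hsp : s(w, Sym2.Mem.other hwe) = ends e := Sym2.other_spec hwe
  set w' := Sym2.Mem.other hwe with hw'
  suffices hS : ∃ m, AltReach ends c F' u α β w' m by
    intro x hx
    rw [← hsp] at hx
    rcases Sym2.mem_iff.mp hx with rfl | rfl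
    · exact ⟨n, hw⟩
    · exact hS
  by_cases hcexp : c e = (if n % 2 = 0 then β else α)
  · exact ⟨n + 1, AltReach.step e hw he hcexp hsp.symm⟩
  · cases hw with
    | base =>
        simp only [Nat.zero_mod, if_pos rfl] at hcexp
        rcases hcol with h | h
        · exact absurd h (hα e he hwe)
        · exact absurd h hcexp
    | @step w₀ _ n₀ e'' hprev he'' hc'' hends'' =>
        -- here w is the endpoint of the previous step edge e''
        have hce : c e = c e'' := by
          rw [hc'']
          rcases Nat.mod_two_eq_zero_or_one n₀ with h2 | h2
          · have h3 : (n₀ + 1) % 2 = 1 := by omega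
            simp only [h2, h3, if_pos rfl] at hc'' hcexp ⊢
            simp only [show (1:ℕ) ≠ 0 by decide, if_false] at hcexp
            tauto
          · have h3 : (n₀ + 1) % 2 = 0 := by omega
            simp only [h2, h3, if_pos rfl] at hc'' hcexp ⊢
            simp only [show (1:ℕ) ≠ 0 by decide, if_false]
            tauto
        by_cases he2 : e = e''
        · subst he2
          have hwne : w₀ ≠ w := by
            intro h
            exact hloop e (by rw [hends'', h]; exact Sym2.mk_isDiag_iff.mpr rfl)
          have : s(w, w') = s(w₀, w) := by rw [hsp, hends'']
          rcases Sym2.eq_iff.mp this with ⟨h1, h2⟩ | ⟨h1, h2⟩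
          · exact absurd h1.symm hwne
          · exact ⟨n₀, h2 ▸ hprev⟩
        · have := hprop e he e'' he'' he2 ⟨w, hwe, by rw [hends'']; simp⟩
          exact absurd hce this

lemma deg_le_of_colorable [DecidableEq V] (ends : E → Sym2 V) (A : Finset E) (k : ℕ)
    (h : EdgeColorable ends A k) (v : V) : degIn ends A v ≤ k := by
  classical
  obtain ⟨c, hlt, hprop⟩ := h
  set T := A.filter (fun e => v ∈ ends e) with hT
  have hinj : Set.InjOn c T := by
    intro e₁ h1 e₂ h2 hc
    by_contra hne
    have h1' := Finset.mem_filter.mp h1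
    have h2' := Finset.mem_filter.mp h2
    exact hprop e₁ h1'.1 e₂ h2'.1 hne ⟨v, h1'.2, h2'.2⟩ hc
  have : T.image c ⊆ Finset.range k := by
    intro γ hγ
    obtain ⟨e', he', rfl⟩ := Finset.mem_image.mp hγ
    exact Finset.mem_range.mpr (hlt e' (Finset.mem_filter.mp he').1)
  calc degIn ends A v = T.card := rfl
    _ = (T.image c).card := (Finset.card_image_of_injOn hinj).symm
    _ ≤ (Finset.range k).card := Finset.card_le_card this
    _ = k := Finset.card_range k

lemma colorable_of_deg [DecidableEq V] (ends : E → Sym2 V)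
    (hloop : ∀ e : E, ¬ (ends e).IsDiag) (f : V → Bool)
    (hf : ∀ e : E, ∀ x y : V, ends e = s(x, y) → f x ≠ f y)
    (k : ℕ) (F : Finset E) (hdeg : ∀ v : V, degIn ends F v ≤ k) :
    EdgeColorable ends F k := by
  classical
  revert hdeg
  induction F using Finset.strongInduction with
  | _ F ih =>
  intro hdeg
  rcases F.eq_empty_or_nonempty with rfl | ⟨e, he⟩
  · exact ⟨fun _ => 0, by simp, by simp⟩
  set F' := F.erase e with hF'
  have hss : F' ⊂ F := Finset.erase_ssubset he
  have hmemF' : ∀ e' : E, e' ∈ F → e' ≠ e → e' ∈ F' := by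
    intro e' h1 h2; exact Finset.mem_erase.mpr ⟨h2, h1⟩
  have hF'F : ∀ e' : E, e' ∈ F' → e' ∈ F := fun e' h => (Finset.mem_erase.mp h).2
  have hdeg' : ∀ v : V, degIn ends F' v ≤ k := by
    intro v
    exact le_trans (Finset.card_le_card
      (Finset.filter_subset_filter _ (Finset.erase_subset e F))) (hdeg v)
  obtain ⟨c, hlt, hprop⟩ := ih F' hss hdeg'
  obtain ⟨u, v, heq⟩ : ∃ u v, ends e = s(u, v) :=
    Sym2.inductionOn (ends e) (fun x y => ⟨x, y, rfl⟩)
  have huv_ne : u ≠ v := by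
    intro h
    exact hloop e (by rw [heq, h]; exact Sym2.mk_isDiag_iff.mpr rfl)
  have hu_mem : u ∈ ends e := by rw [heq]; exact Sym2.mem_mk_left u v
  have hv_mem : v ∈ ends e := by rw [heq]; exact Sym2.mem_mk_right u v
  -- missing colors
  have hmiss : ∀ x : V, x ∈ ends e →
      ∃ γ, γ < k ∧ ∀ e' ∈ F', x ∈ ends e' → c e' ≠ γ := by
    intro x hx
    set T := (F'.filter (fun e' => x ∈ ends e')).image c with hTdef
    have hcard : T.card < k := by
      have h1 : T.card ≤ (F'.filter (fun e' => x ∈ ends e')).card := Finset.card_image_le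
      have h2 : (F'.filter (fun e' => x ∈ ends e')).card <
          (F.filter (fun e' => x ∈ ends e')).card := by
        rw [hF', Finset.filter_erase]
        exact Finset.card_erase_lt_of_mem (Finset.mem_filter.mpr ⟨he, hx⟩)
      exact lt_of_le_of_lt h1 (lt_of_lt_of_le h2 (hdeg x))
    have hex : ∃ γ ∈ Finset.range k, γ ∉ T := by
      by_contra hcon
      push_neg at hcon
      have := Finset.card_le_card hcon
      rw [Finset.card_range] at this
      omega
    obtain ⟨γ, hγk, hγT⟩ := hex
    refine ⟨γ, Finset.mem_range.mp hγk, ?_⟩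
    intro e' he' hxe' hc
    exact hγT (Finset.mem_image.mpr ⟨e', Finset.mem_filter.mpr ⟨he', hxe'⟩, hc⟩)
  obtain ⟨α, hαk, hα⟩ := hmiss u hu_mem
  obtain ⟨β, hβk, hβ⟩ := hmiss v hv_mem
  by_cases hab : α = β
  · -- common missing color: color e with α
    subst hab
    refine ⟨fun e' => if e' = e then α else c e', ?_, ?_⟩
    · intro e' he'
      by_cases h : e' = e
      · simp [h, hαk]
      · simp only [h, if_false]
        exact hlt e' (hmemF' e' he' h)
    · intro e₁ h1 e₂ h2 hne hsh
      have key : ∀ b ∈ F, b ≠ e → (∃ x, x ∈ ends e ∧ x ∈ ends b) → c b ≠ α := by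
        rintro b hb hbe ⟨x, hxe, hxb⟩
        rw [heq] at hxe
        rcases Sym2.mem_iff.mp hxe with rfl | rfl
        · exact hα b (hmemF' b hb hbe) hxb
        · exact hβ b (hmemF' b hb hbe) hxb
      by_cases h1e : e₁ = e <;> by_cases h2e : e₂ = e
      · exact absurd (h1e.trans h2e.symm) hne
      · subst h1e
        simp only [if_pos rfl, h2e, if_false]
        exact (key e₂ h2 h2e hsh).symm
      · subst h2e
        simp only [if_pos rfl, h1e, if_false]
        exact key e₁ h1 h1e ⟨hsh.choose, hsh.choose_spec.2, hsh.choose_spec.1⟩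
      · simp only [h1e, h2e, if_false]
        exact hprop e₁ (hmemF' e₁ h1 h1e) e₂ (hmemF' e₂ h2 h2e) hne hsh
  · -- α ≠ β : swap colors along the alternating component of u, then color e with β
    set S : V → Prop := fun w => ∃ n, AltReach ends c F' u α β w n with hSdef
    have hSu : S u := ⟨0, AltReach.base⟩
    have hclosed : ∀ e' ∈ F', (c e' = α ∨ c e' = β) →
        (∃ x ∈ ends e', S x) → ∀ x ∈ ends e', S x := by
      rintro e' he' hcol ⟨x, hx, n, hreach⟩ y hy
      exact altReach_closed hloop hab hprop hα he' hcol hreach hx y hy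
    have hSv : ¬ S v := by
      rintro ⟨n, hn⟩
      cases hn with
      | base => exact huv_ne rfl
      | @step w₀ _ n₀ e'' hprev he'' hc'' hends'' =>
          have hv_mem' : v ∈ ends e'' := by rw [hends'']; exact Sym2.mem_mk_right w₀ v
          have hfp : f w₀ = f u := by
            have h1 := hf e'' _ _ hends''
            have h2 := hf e u v heq
            revert h1 h2
            cases f w₀ <;> cases f u <;> cases f v <;> simp
          have hpar := (altReach_parity f hf hprev).mp hfp
          rw [if_pos hpar] at hc''
          exact hβ e'' he'' hv_mem' hc''
    set σ : ℕ → ℕ := fun x => if x = α then β else if x = β then α else x with hσdef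
    have hσα : σ α = β := by simp [hσdef]
    have hσβ : σ β = α := by simp [hσdef, Ne.symm hab]
    have hσother : ∀ x, x ≠ α → x ≠ β → σ x = x := by
      intro x h1 h2; simp [hσdef, h1, h2]
    have hσinv : ∀ x, σ (σ x) = x := by
      intro x
      rcases eq_or_ne x α with rfl | h1
      · rw [hσα, hσβ]
      rcases eq_or_ne x β with rfl | h2
      · rw [hσβ, hσα]
      · rw [hσother x h1 h2, hσother x h1 h2]
    have hσinj : Function.Injective σ := Function.LeftInverse.injective hσinv
    have hσlt : ∀ x, x < k → σ x < k := by
      intro x hx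
      rcases eq_or_ne x α with rfl | h1
      · rw [hσα]; exact hβk
      rcases eq_or_ne x β with rfl | h2
      · rw [hσβ]; exact hαk
      · rw [hσother x h1 h2]; exact hx
    set sw : E → Prop :=
      fun e' => e' ∈ F' ∧ (c e' = α ∨ c e' = β) ∧ ∃ x ∈ ends e', S x with hswdef
    have hswS : ∀ e', sw e' → ∀ x ∈ ends e', S x := by
      rintro e' ⟨h1, h2, h3⟩ x hx
      exact hclosed e' h1 h2 h3 x hx
    set c1 : E → ℕ := fun e' => if sw e' then σ (c e') else c e' with hc1def
    have hc1lt : ∀ e' ∈ F', c1 e' < k := by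
      intro e' he'
      by_cases h : sw e'
      · simp only [hc1def, if_pos h]; exact hσlt _ (hlt e' he')
      · simp only [hc1def, if_neg h]; exact hlt e' he'
    -- properness of c1 on F'
    have hkey : ∀ a b : E, a ∈ F' → b ∈ F' → (∃ x, x ∈ ends a ∧ x ∈ ends b) →
        sw a → ¬ sw b → c b ≠ α ∧ c b ≠ β := by
      rintro a b ha hb ⟨x, hxa, hxb⟩ hswa hswb
      constructor <;> intro hcb
      · exact hswb ⟨hb, Or.inl hcb, x, hxb, hswS a hswa x hxa⟩
      · exact hswb ⟨hb, Or.inr hcb, x, hxb, hswS a hswa x hxa⟩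
    have hprop1 : ∀ e₁ ∈ F', ∀ e₂ ∈ F', e₁ ≠ e₂ →
        (∃ x, x ∈ ends e₁ ∧ x ∈ ends e₂) → c1 e₁ ≠ c1 e₂ := by
      intro e₁ h1 e₂ h2 hne hsh
      have hcc := hprop e₁ h1 e₂ h2 hne hsh
      by_cases s1 : sw e₁ <;> by_cases s2 : sw e₂
      · simp only [hc1def, if_pos s1, if_pos s2]
        exact fun h => hcc (hσinj h)
      · obtain ⟨hb1, hb2⟩ := hkey e₁ e₂ h1 h2 hsh s1 s2
        simp only [hc1def, if_pos s1, if_neg s2]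
        rcases s1.2.1 with h | h
        · rw [h, hσα]; exact fun hh => hb2 hh.symm
        · rw [h, hσβ]; exact fun hh => hb1 hh.symm
      · obtain ⟨hb1, hb2⟩ := hkey e₂ e₁ h2 h1
          ⟨hsh.choose, hsh.choose_spec.2, hsh.choose_spec.1⟩ s2 s1
        simp only [hc1def, if_neg s1, if_pos s2]
        rcases s2.2.1 with h | h
        · rw [h, hσα]; exact hb2
        · rw [h, hσβ]; exact hb1
      · simp only [hc1def, if_neg s1, if_neg s2]
        exact hcc
    -- no edge of F' adjacent to e gets color β under c1
    have hkey2 : ∀ b ∈ F', (∃ x, x ∈ ends e ∧ x ∈ ends b) → c1 b ≠ β := by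
      rintro b hb ⟨x, hxe, hxb⟩
      rw [heq] at hxe
      rcases Sym2.mem_iff.mp hxe with hx | hx
      · -- shares vertex u
        rw [hx] at hxb
        by_cases hcb : c b = α ∨ c b = β
        · have hswb : sw b := ⟨hb, hcb, u, hxb, hSu⟩
          simp only [hc1def, if_pos hswb]
          rcases hcb with h | h
          · exact absurd h (hα b hb hxb)
          · rw [h, hσβ]; exact hab
        · push_neg at hcb
          have hnsw : ¬ sw b := fun hswb => hcb.1 (by
            rcases hswb.2.1 with h | h
            · exact h
            · exact absurd h hcb.2)
          simp only [hc1def, if_neg hnsw]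
          exact hcb.2
      · -- shares vertex v
        rw [hx] at hxb
        have hnsw : ¬ sw b := fun hswb => hSv (hswS b hswb v hxb)
        simp only [hc1def, if_neg hnsw]
        exact hβ b hb hxb
    refine ⟨fun e' => if e' = e then β else c1 e', ?_, ?_⟩
    · intro e' he'
      by_cases h : e' = e
      · simp [h, hβk]
      · simp only [h, if_false]
        exact hc1lt e' (hmemF' e' he' h)
    · intro e₁ h1 e₂ h2 hne hsh
      by_cases h1e : e₁ = e <;> by_cases h2e : e₂ = e
      · exact absurd (h1e.trans h2e.symm) hne
      · subst h1e
        simp only [if_pos rfl, h2e, if_false]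
        exact fun hh => hkey2 e₂ (hmemF' e₂ h2 h2e) hsh hh.symm
      · subst h2e
        simp only [if_pos rfl, h1e, if_false]
        exact hkey2 e₁ (hmemF' e₁ h1 h1e)
          ⟨hsh.choose, hsh.choose_spec.2, hsh.choose_spec.1⟩
      · simp only [h1e, h2e, if_false]
        exact hprop1 e₁ (hmemF' e₁ h1 h1e) e₂ (hmemF' e₂ h2 h2e) hne hsh

/-- A subgraph `F` of a finite bipartite loopless multigraph is
`k`-edge-colorable iff its maximum degree is at most `k`. -/
theorem stmt_0 [Fintype V] [Fintype E] [DecidableEq V] (ends : E → Sym2 V)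
    (hloop : ∀ e : E, ¬ (ends e).IsDiag) (hbip : IsBipartite ends)
    (k : ℕ) (F : Finset E) :
    EdgeColorable ends F k ↔ ∀ v : V, degIn ends F v ≤ k := by
  constructor
  · intro h v
    exact deg_le_of_colorable ends F k h v
  · intro h
    obtain ⟨f, hf⟩ := hbip
    exact colorable_of_deg ends hloop f hf k F h
end

section
/- Let G be a finite bipartite multigraph (no loops), let k ≥ 1, and let A be a k-edge-colorable subgraph of G with |E(A)| < ν_k(G). Then G contains an A-augmenting path, i.e., a simple path P of odd length from a vertex u to a vertex v in which the even edges (2nd, 4th, ...) belong to A, the odd edges (1st, 3rd, ...) lie outside A, and deg_A(u) ≤ k − 1 and deg_A(v) ≤ k − 1. -/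
variable {V E : Type*}

lemma degIn_le_of_colorable [DecidableEq V] (ends : E → Sym2 V) {A : Finset E} {k : ℕ}
    (h : EdgeColorable ends A k) (v : V) : degIn ends A v ≤ k := by
  obtain ⟨c, hlt, hne⟩ := h
  have hinj : Set.InjOn c (A.filter (fun e => v ∈ ends e)) := by
    intro e₁ h₁ e₂ h₂ hc
    simp only [Finset.coe_filter, Set.mem_setOf_eq] at h₁ h₂
    by_contra hne'
    exact hne e₁ h₁.1 e₂ h₂.1 hne' ⟨v, h₁.2, h₂.2⟩ hc
  calc degIn ends A v = ((A.filter (fun e => v ∈ ends e)).image c).card :=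
        (Finset.card_image_of_injOn hinj).symm
    _ ≤ (Finset.range k).card := by
        apply Finset.card_le_card
        intro n hn
        simp only [Finset.mem_image, Finset.mem_filter] at hn
        obtain ⟨e, ⟨heA, _⟩, rfl⟩ := hn
        simpa using hlt e heA
    _ = k := Finset.card_range k

lemma degIn_sum_eq [DecidableEq V] (ends : E → Sym2 V) (F : Finset E) (W : Finset V) :
    ∑ w ∈ W, degIn ends F w = ∑ e ∈ F, (W.filter (fun w => w ∈ ends e)).card := by
  unfold degIn
  simp_rw [Finset.card_filter]
  exact Finset.sum_comm

lemma card_filter_mem_ends [DecidableEq V] {a b : V} (W : Finset V) (hab : a ≠ b) :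
    (W.filter (fun w => w ∈ s(a,b))).card
      = (if a ∈ W then 1 else 0) + (if b ∈ W then 1 else 0) := by
  have h1 : W.filter (fun w => w ∈ s(a,b)) = W.filter (fun w => w = a) ∪ W.filter (fun w => w = b) := by
    rw [← Finset.filter_or]
    apply Finset.filter_congr
    intro w _
    simp [Sym2.mem_iff]
  have hdisj : Disjoint (W.filter (fun w => w = a)) (W.filter (fun w => w = b)) := by
    rw [Finset.disjoint_left]
    intro w hw hw'
    simp only [Finset.mem_filter] at hw hw'
    exact hab (hw.2 ▸ hw'.2 ▸ rfl)
  rw [h1, Finset.card_union_of_disjoint hdisj, Finset.filter_eq', Finset.filter_eq']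
  split <;> split <;> simp

lemma sum_degIn_univ [DecidableEq V] [Fintype V] (ends : E → Sym2 V)
    (hloop : ∀ e : E, ¬ (ends e).IsDiag) (F : Finset E) :
    ∑ v, degIn ends F v = 2 * F.card := by
  rw [degIn_sum_eq]
  rw [Finset.sum_congr rfl (fun e _ => ?_), Finset.sum_const, smul_eq_mul, mul_comm]
  obtain ⟨a, b, hab⟩ : ∃ a b, ends e = s(a, b) := Sym2.ind (fun a b => ⟨a, b, rfl⟩) (ends e)
  have hne : a ≠ b := by
    intro h; exact hloop e (by rw [hab, h]; exact Sym2.isDiag_iff_proj_eq |>.mpr rfl)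
  rw [hab, card_filter_mem_ends _ hne]
  simp

lemma degIn_sdiff_add_inter [DecidableEq V] [DecidableEq E] (ends : E → Sym2 V)
    (A B : Finset E) (v : V) :
    degIn ends (A \ B) v + degIn ends (A ∩ B) v = degIn ends A v := by
  unfold degIn
  rw [← Finset.card_union_of_disjoint, ← Finset.filter_union, Finset.sdiff_union_inter]
  exact Finset.disjoint_filter_filter (Finset.disjoint_sdiff_inter A B)

/-- An alternating walk of odd length with both endpoints of small degree. -/
def GoodWalk [DecidableEq V] (ends : E → Sym2 V) (A : Finset E) (k : ℕ)
    (m : ℕ) (vs : ℕ → V) (es : ℕ → E) : Prop :=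
  Odd m ∧ (∀ i < m, ends (es i) = s(vs i, vs (i+1))) ∧
  (∀ i < m, i % 2 = 0 → es i ∉ A) ∧ (∀ i < m, i % 2 = 1 → es i ∈ A) ∧
  degIn ends A (vs 0) < k ∧ degIn ends A (vs m) < k

lemma goodWalk_isAugPath [DecidableEq V] {ends : E → Sym2 V} {A : Finset E} {k : ℕ}
    (hbip : IsBipartite ends)
    (h : ∃ m vs es, GoodWalk ends A k m vs es) : IsAugPath ends A k := by
  classical
  obtain ⟨f, hf⟩ := hbip
  set P : ℕ → Prop := fun m => ∃ vs es, GoodWalk ends A k m vs es with hP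
  have hex : ∃ m, P m := h
  set m := Nat.find hex with hm
  obtain ⟨vs, es, hodd, hends, h0, h1, hd0, hdm⟩ := Nat.find_spec hex
  -- parity of vertices along the walk
  have hfv : ∀ t ≤ m, f (vs t) = if t % 2 = 0 then f (vs 0) else !(f (vs 0)) := by
    intro t
    induction t with
    | zero => simp
    | succ n ih =>
      intro hn
      have h1' := ih (by omega)
      have h2' : f (vs n) ≠ f (vs (n+1)) := hf (es n) _ _ (hends n (by omega))
      rcases Nat.even_or_odd n with he | ho
      · have hn0 : n % 2 = 0 := Nat.even_iff.mp he
        have hn1 : (n+1) % 2 ≠ 0 := by omega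
        rw [if_pos hn0] at h1'
        rw [if_neg hn1]
        rw [h1'] at h2'
        cases hb : f (vs 0) <;> (rw [hb] at h2'; revert h2'; cases (f (vs (n+1))) <;> simp)
      · have hn0 : n % 2 ≠ 0 := Nat.odd_iff.mp ho ▸ by omega
        have hn1 : (n+1) % 2 = 0 := by omega
        rw [if_neg hn0] at h1'
        rw [if_pos hn1]
        rw [h1'] at h2'
        cases hb : f (vs 0) <;> (rw [hb] at h2'; revert h2'; cases (f (vs (n+1))) <;> simp)
  have hparity : ∀ i j, i ≤ m → j ≤ m → vs i = vs j → i % 2 = j % 2 := by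
    intro i j hi hj hveq
    have := (hfv i hi).symm.trans ((congrArg f hveq).trans (hfv j hj))
    by_contra hne
    rcases Nat.mod_two_eq_zero_or_one i with hi2 | hi2 <;>
      rcases Nat.mod_two_eq_zero_or_one j with hj2 | hj2 <;>
        simp [hi2, hj2] at this hne <;> revert this <;> cases (f (vs 0)) <;> simp
  -- injectivity via splicing and minimality
  have hinj : ∀ i j, i < j → j ≤ m → vs i ≠ vs j := by
    intro i j hij hj hveq
    obtain ⟨d, rfl⟩ : ∃ d, j = i + d := ⟨j - i, by omega⟩
    have hdpos : 0 < d := by omega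
    have hd2 : d % 2 = 0 := by
      have := hparity i (i + d) (by omega) hj hveq
      omega
    have hm2 : m % 2 = 1 := Nat.odd_iff.mp hodd
    set vs' : ℕ → V := fun t => if t ≤ i then vs t else vs (t + d) with hvs'
    set es' : ℕ → E := fun t => if t < i then es t else es (t + d) with hes'
    have hvt : ∀ t, i ≤ t → vs' t = vs (t + d) := by
      intro t ht
      by_cases hti : t ≤ i
      · have htieq : t = i := le_antisymm hti ht
        subst htieq
        simp only [hvs', if_pos (le_refl t)]
        exact hveq
      · simp only [hvs', if_neg hti]
    have : P (m - d) := by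
      refine ⟨vs', es', Nat.odd_iff.mpr (by omega), ?_, ?_, ?_, ?_, ?_⟩
      · intro t ht
        by_cases htc : t < i
        · simp only [hvs', hes', if_pos htc, if_pos (le_of_lt htc),
            if_pos (show t + 1 ≤ i by omega)]
          exact hends t (by omega)
        · have e1 : es' t = es (t + d) := by simp only [hes', if_neg htc]
          have e2 : vs' t = vs (t + d) := hvt t (by omega)
          have e3 : vs' (t + 1) = vs (t + d + 1) := by
            simp only [hvs', if_neg (show ¬ (t + 1 ≤ i) by omega)]
            rw [Nat.add_right_comm]
          rw [e1, e2, e3]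
          exact hends (t + d) (by omega)
      · intro t ht hpar
        by_cases htc : t < i
        · simp only [hes', if_pos htc]; exact h0 t (by omega) hpar
        · simp only [hes', if_neg htc]; exact h0 (t + d) (by omega) (by omega)
      · intro t ht hpar
        by_cases htc : t < i
        · simp only [hes', if_pos htc]; exact h1 t (by omega) hpar
        · simp only [hes', if_neg htc]; exact h1 (t + d) (by omega) (by omega)
      · simp only [hvs', if_pos (Nat.zero_le i)]; exact hd0
      · by_cases hc : m - d ≤ i
        · have hji : i + d = m := by omega
          have hmd : m - d = i := by omega
          rw [hmd]
          simp only [hvs', if_pos (le_refl i)]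
          rw [hveq, hji]; exact hdm
        · have := hvt (m - d) (by omega)
          rw [this, show m - d + d = m by omega]; exact hdm
    exact absurd this (Nat.find_min hex (by omega))
  refine ⟨m, fun t => vs t.val, fun t => es t.val, hodd, ?_, ?_, ?_, ?_, ?_, ?_⟩
  · intro a b hab
    simp only at hab
    rcases lt_trichotomy (a : ℕ) (b : ℕ) with hlt | he | hlt
    · exact absurd hab (hinj a b hlt (by omega) )
    · exact Fin.ext he
    · exact absurd hab.symm (hinj b a hlt (by omega))
  · intro t
    have := hends t.val t.isLt
    simpa using this
  · intro t ht; exact h0 t.val t.isLt ht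
  · intro t ht; exact h1 t.val t.isLt ht
  · simpa using Nat.le_sub_one_of_lt hd0
  · simpa using Nat.le_sub_one_of_lt hdm

inductive Reach [DecidableEq V] (ends : E → Sym2 V) (A : Finset E) (k : ℕ) : Bool → V → Prop
  | base (v : V) : degIn ends A v < k → Reach ends A k false v
  | step_odd (u v : V) (e : E) : Reach ends A k false u → e ∉ A → ends e = s(u, v) →
      Reach ends A k true v
  | step_even (u v : V) (e : E) : Reach ends A k true u → e ∈ A → ends e = s(u, v) →
      Reach ends A k false v

lemma reach_walk [DecidableEq V] {ends : E → Sym2 V} {A : Finset E} {k : ℕ} (e₀ : E)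
    {b : Bool} {v : V} (h : Reach ends A k b v) :
    ∃ (m : ℕ) (vs : ℕ → V) (es : ℕ → E),
      m % 2 = (if b then 1 else 0) ∧
      (∀ i < m, ends (es i) = s(vs i, vs (i+1))) ∧
      (∀ i < m, i % 2 = 0 → es i ∉ A) ∧ (∀ i < m, i % 2 = 1 → es i ∈ A) ∧
      degIn ends A (vs 0) < k ∧ vs m = v := by
  induction h with
  | base v hv =>
      exact ⟨0, fun _ => v, fun _ => e₀, by simp, by omega, by omega, by omega, hv, rfl⟩
  | step_odd u w e hu heA hends ih =>
      obtain ⟨m, vs, es, hm, hends', h0, h1, hdeg, hlast⟩ := ih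
      simp at hm
      refine ⟨m + 1, fun t => if t ≤ m then vs t else w, fun t => if t < m then es t else e,
        by simp; omega, ?_, ?_, ?_, ?_, ?_⟩
      · intro t ht
        by_cases htc : t < m
        · simp only [if_pos htc, if_pos (le_of_lt htc), if_pos (show t + 1 ≤ m by omega)]
          exact hends' t htc
        · have hte : t = m := by omega
          subst hte
          simp only [if_neg (lt_irrefl t), if_pos (le_refl t),
            if_neg (show ¬ (t + 1 ≤ t) by omega)]
          rw [hlast]; exact hends
      · intro t ht hpar
        by_cases htc : t < m
        · simp only [if_pos htc]; exact h0 t htc hpar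
        · simp only [if_neg htc]; exact heA
      · intro t ht hpar
        by_cases htc : t < m
        · simp only [if_pos htc]; exact h1 t htc hpar
        · omega
      · simpa using hdeg
      · simp
  | step_even u w e hu heA hends ih =>
      obtain ⟨m, vs, es, hm, hends', h0, h1, hdeg, hlast⟩ := ih
      simp at hm
      refine ⟨m + 1, fun t => if t ≤ m then vs t else w, fun t => if t < m then es t else e,
        by simp; omega, ?_, ?_, ?_, ?_, ?_⟩
      · intro t ht
        by_cases htc : t < m
        · simp only [if_pos htc, if_pos (le_of_lt htc), if_pos (show t + 1 ≤ m by omega)]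
          exact hends' t htc
        · have hte : t = m := by omega
          subst hte
          simp only [if_neg (lt_irrefl t), if_pos (le_refl t),
            if_neg (show ¬ (t + 1 ≤ t) by omega)]
          rw [hlast]; exact hends
      · intro t ht hpar
        by_cases htc : t < m
        · simp only [if_pos htc]; exact h0 t htc hpar
        · omega
      · intro t ht hpar
        by_cases htc : t < m
        · simp only [if_pos htc]; exact h1 t htc hpar
        · simp only [if_neg htc]; exact heA
      · simpa using hdeg
      · simp

lemma reach_both_goodWalk [DecidableEq V] {ends : E → Sym2 V} {A : Finset E} {k : ℕ} (e₀ : E)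
    {v : V} (hT : Reach ends A k true v) (hF : Reach ends A k false v) :
    ∃ m vs es, GoodWalk ends A k m vs es := by
  obtain ⟨m₁, vs₁, es₁, hm₁, hends₁, h0₁, h1₁, hdeg₁, hlast₁⟩ := reach_walk e₀ hT
  obtain ⟨m₂, vs₂, es₂, hm₂, hends₂, h0₂, h1₂, hdeg₂, hlast₂⟩ := reach_walk e₀ hF
  simp at hm₁ hm₂
  refine ⟨m₁ + m₂, fun t => if t ≤ m₁ then vs₁ t else vs₂ (m₁ + m₂ - t),
    fun t => if t < m₁ then es₁ t else es₂ (m₁ + m₂ - 1 - t),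
    Nat.odd_iff.mpr (by omega), ?_, ?_, ?_, ?_, ?_⟩
  · intro t ht
    by_cases htc : t < m₁
    · simp only [if_pos htc, if_pos (le_of_lt htc), if_pos (show t + 1 ≤ m₁ by omega)]
      exact hends₁ t htc
    · have hs : m₁ + m₂ - 1 - t < m₂ := by omega
      have e3 : (if t + 1 ≤ m₁ then vs₁ (t+1) else vs₂ (m₁ + m₂ - (t+1)))
          = vs₂ (m₁ + m₂ - 1 - t) := by
        rw [if_neg (show ¬ (t + 1 ≤ m₁) by omega)]
        congr 1; omega
      have e2 : (if t ≤ m₁ then vs₁ t else vs₂ (m₁ + m₂ - t))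
          = vs₂ (m₁ + m₂ - 1 - t + 1) := by
        by_cases htm : t ≤ m₁
        · have : t = m₁ := by omega
          subst this
          rw [if_pos (le_refl t), hlast₁, ← hlast₂]
          congr 1; omega
        · rw [if_neg htm]
          congr 1; omega
      simp only [if_neg htc]
      rw [e2, e3, hends₂ _ hs, Sym2.eq_swap]
  · intro t ht hpar
    by_cases htc : t < m₁
    · simp only [if_pos htc]; exact h0₁ t htc hpar
    · simp only [if_neg htc]
      exact h0₂ _ (by omega) (by omega)
  · intro t ht hpar
    by_cases htc : t < m₁
    · simp only [if_pos htc]; exact h1₁ t htc hpar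
    · simp only [if_neg htc]
      exact h1₂ _ (by omega) (by omega)
  · simpa using hdeg₁
  · have : (if m₁ + m₂ ≤ m₁ then vs₁ (m₁ + m₂) else vs₂ (m₁ + m₂ - (m₁ + m₂))) = vs₂ 0 := by
      by_cases hc : m₁ + m₂ ≤ m₁
      · have h2z : m₂ = 0 := by omega
        rw [if_pos hc, show m₁ + m₂ = m₁ by omega, hlast₁, ← hlast₂, h2z]
      · rw [if_neg hc]; congr 1; omega
    show degIn ends A (if m₁ + m₂ ≤ m₁ then vs₁ (m₁ + m₂) else vs₂ (m₁ + m₂ - (m₁ + m₂))) < k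
    rw [this]; exact hdeg₂

lemma ends_pair {ends : E → Sym2 V} (hloop : ∀ e : E, ¬ (ends e).IsDiag) (e : E) :
    ∃ a b, a ≠ b ∧ ends e = s(a, b) := by
  obtain ⟨a, b, hab⟩ : ∃ a b, ends e = s(a, b) := Sym2.ind (fun a b => ⟨a, b, rfl⟩) (ends e)
  refine ⟨a, b, ?_, hab⟩
  intro h
  exact hloop e (by rw [hab, h]; exact (Sym2.isDiag_iff_proj_eq).mpr rfl)

/-- In a bipartite loopless multigraph, a non-maximum `k`-edge-colorable
subgraph `A` admits an `A`-augmenting path. -/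
theorem stmt_6 [Fintype V] [Fintype E] [DecidableEq V] (ends : E → Sym2 V)
    (hloop : ∀ e : E, ¬ (ends e).IsDiag) (hbip : IsBipartite ends)
    (k : ℕ) (hk : 1 ≤ k) (A : Finset E) (hcol : EdgeColorable ends A k)
    (hlt : A.card < nu ends (Finset.univ : Finset E) k) :
    IsAugPath ends A k := by
  classical
  by_contra haug
  -- extract a maximum colorable subgraph B
  simp only [nu] at hlt
  set S := {n | ∃ F : Finset E, F ⊆ (Finset.univ : Finset E) ∧ EdgeColorable ends F k ∧ F.card = n}
    with hSdef
  have hSne : S.Nonempty := ⟨0, ∅, by simp, ⟨fun _ => 0, by simp, by simp⟩, by simp⟩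
  have hSbdd : BddAbove S := by
    refine ⟨Fintype.card E, ?_⟩
    rintro n ⟨F, -, -, rfl⟩
    exact Finset.card_le_univ F
  obtain ⟨B, -, hBcol, hBcard⟩ := Nat.sSup_mem hSne hSbdd
  have hABcard : A.card < B.card := by rw [hBcard]; exact hlt
  have hAk := degIn_le_of_colorable ends hcol
  have hBk := degIn_le_of_colorable ends hBcol
  obtain ⟨e₀, -⟩ : B.Nonempty := Finset.card_pos.mp (by omega)
  -- consequences of the absence of an augmenting path
  have hNW : ¬ ∃ m vs es, GoodWalk ends A k m vs es := fun h => haug (goodWalk_isAugPath hbip h)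
  have hYdeg : ∀ w, Reach ends A k true w → degIn ends A w = k := by
    intro w hw
    by_contra hne
    have hlt' : degIn ends A w < k := lt_of_le_of_ne (hAk w) hne
    obtain ⟨m, vs, es, hm, he, h0, h1, hd, hl⟩ := reach_walk e₀ hw
    simp only [if_pos] at hm
    exact hNW ⟨m, vs, es, Nat.odd_iff.mpr hm, he, h0, h1, hd, by rw [hl]; exact hlt'⟩
  have hUY : ∀ w, Reach ends A k false w → Reach ends A k true w → False := by
    intro w h1 h2; exact hNW (reach_both_goodWalk e₀ h2 h1)
  set U := Finset.univ.filter (fun w => Reach ends A k false w) with hUdef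
  set Y := Finset.univ.filter (fun w => Reach ends A k true w) with hYdef
  have hmemU : ∀ w, w ∈ U ↔ Reach ends A k false w := by
    intro w; rw [hUdef]; simp
  have hmemY : ∀ w, w ∈ Y ↔ Reach ends A k true w := by
    intro w; rw [hYdef]; simp
  -- step a : U-incidences of B\A are at most Y-incidences
  have step_a : ∑ v ∈ U, degIn ends (B \ A) v ≤ ∑ v ∈ Y, degIn ends (B \ A) v := by
    rw [degIn_sum_eq, degIn_sum_eq]
    apply Finset.sum_le_sum
    intro e he
    have heA : e ∉ A := (Finset.mem_sdiff.mp he).2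
    obtain ⟨a, b, hne, hab⟩ := ends_pair hloop e
    rw [hab, card_filter_mem_ends U hne, card_filter_mem_ends Y hne]
    have haU : a ∈ U → b ∈ Y := fun h =>
      (hmemY b).mpr (Reach.step_odd a b e ((hmemU a).mp h) heA hab)
    have hbU : b ∈ U → a ∈ Y := fun h =>
      (hmemY a).mpr (Reach.step_odd b a e ((hmemU b).mp h) heA (by rw [hab, Sym2.eq_swap]))
    by_cases ha : a ∈ U <;> by_cases hb : b ∈ U
    · exact (hUY b ((hmemU b).mp hb) ((hmemY b).mp (haU ha))).elim
    · rw [if_pos ha, if_neg hb, if_pos (haU ha)]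
      split <;> omega
    · rw [if_neg ha, if_pos hb, if_pos (hbU hb)]
      split <;> omega
    · rw [if_neg ha, if_neg hb]
      exact Nat.zero_le _
  -- step b : Y-incidences of A\B are at most U-incidences
  have step_b : ∑ v ∈ Y, degIn ends (A \ B) v ≤ ∑ v ∈ U, degIn ends (A \ B) v := by
    rw [degIn_sum_eq, degIn_sum_eq]
    apply Finset.sum_le_sum
    intro e he
    have heA : e ∈ A := (Finset.mem_sdiff.mp he).1
    obtain ⟨a, b, hne, hab⟩ := ends_pair hloop e
    rw [hab, card_filter_mem_ends U hne, card_filter_mem_ends Y hne]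
    have haY : a ∈ Y → b ∈ U := fun h =>
      (hmemU b).mpr (Reach.step_even a b e ((hmemY a).mp h) heA hab)
    have hbY : b ∈ Y → a ∈ U := fun h =>
      (hmemU a).mpr (Reach.step_even b a e ((hmemY b).mp h) heA (by rw [hab, Sym2.eq_swap]))
    by_cases ha : a ∈ Y <;> by_cases hb : b ∈ Y
    · exact (hUY b ((hmemU b).mp (haY ha)) ((hmemY b).mp hb)).elim
    · rw [if_pos ha, if_neg hb, if_pos (haY ha)]
      split <;> omega
    · rw [if_neg ha, if_pos hb, if_pos (hbY hb)]
      split <;> omega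
    · rw [if_neg ha, if_neg hb]
      exact Nat.zero_le _
  -- step c : pointwise comparison outside U
  have step_c : ∀ v, ¬ Reach ends A k false v →
      degIn ends (B \ A) v ≤ degIn ends (A \ B) v := by
    intro v hnr
    have hAeq : degIn ends A v = k := by
      rcases lt_or_eq_of_le (hAk v) with h | h
      · exact absurd (Reach.base v h) hnr
      · exact h
    have h1 := degIn_sdiff_add_inter ends A B v
    have h2 := degIn_sdiff_add_inter ends B A v
    have h3 : degIn ends (B ∩ A) v = degIn ends (A ∩ B) v := by rw [Finset.inter_comm]
    have h4 : degIn ends B v ≤ k := hBk v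
    omega
  -- pointwise on Y
  have step_y : ∑ v ∈ Y, degIn ends (B \ A) v ≤ ∑ v ∈ Y, degIn ends (A \ B) v := by
    apply Finset.sum_le_sum
    intro v hv
    exact step_c v (fun h => hUY v h ((hmemY v).mp hv))
  -- pointwise on the complement of U
  have step_nc : ∑ v ∈ Finset.univ.filter (fun w => ¬ Reach ends A k false w),
      degIn ends (B \ A) v ≤ ∑ v ∈ Finset.univ.filter (fun w => ¬ Reach ends A k false w),
      degIn ends (A \ B) v := by
    apply Finset.sum_le_sum
    intro v hv
    exact step_c v (by simpa using (Finset.mem_filter.mp hv).2)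
  -- assemble
  have hsplitB := Finset.sum_filter_add_sum_filter_not Finset.univ
    (fun w => Reach ends A k false w) (fun v => degIn ends (B \ A) v)
  have hsplitA := Finset.sum_filter_add_sum_filter_not Finset.univ
    (fun w => Reach ends A k false w) (fun v => degIn ends (A \ B) v)
  have htotB := sum_degIn_univ ends hloop (B \ A)
  have htotA := sum_degIn_univ ends hloop (A \ B)
  have hchain : ∑ v ∈ U, degIn ends (B \ A) v ≤ ∑ v ∈ U, degIn ends (A \ B) v :=
    le_trans step_a (le_trans step_y step_b)
  have hfinal : (B \ A).card ≤ (A \ B).card := by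
    rw [hUdef] at hchain
    omega
  have hBA := Finset.card_sdiff_add_card_inter B A
  have hAB := Finset.card_sdiff_add_card_inter A B
  have hint : (B ∩ A).card = (A ∩ B).card := by rw [Finset.inter_comm]
  omega
end

section
/- Let G be a finite bipartite multigraph (no loops) and let k ≥ 1. Then 2·ν_k(G) ≥ ν_{k−1}(G) + ν_{k+1}(G), i.e., ν_k(G) ≥ (ν_{k−1}(G) + ν_{k+1}(G))/2. -/
variable {V E : Type*}

namespace Stmt8Aux

/-- Walks in a multigraph given by `ends`. -/
inductive IsWalk (ends : E → Sym2 V) : V → V → List E → Prop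
  | nil (v : V) : IsWalk ends v v []
  | cons {u v w : V} {e : E} {l : List E} (h : ends e = s(u, v))
      (hw : IsWalk ends v w l) : IsWalk ends u w (e :: l)

/-- Alternating signed count of edges incident to `x`. -/
def acount [DecidableEq V] (ends : E → Sym2 V) (x : V) : List E → ℤ
  | [] => 0
  | e :: l => (if x ∈ ends e then 1 else 0) - acount ends x l

/-- Number of edges in the list incident to `x`. -/
def ndeg [DecidableEq V] (ends : E → Sym2 V) (x : V) : List E → ℕ
  | [] => 0
  | e :: l => (if x ∈ ends e then 1 else 0) + ndeg ends x l

/-- Position-parity filter: `pfl true l` takes even positions, `pfl false l` odd ones. -/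
def pfl : Bool → List E → List E
  | _, [] => []
  | true, e :: l => e :: pfl false l
  | false, _ :: l => pfl true l

/-- Alternating color constraint: colors along the list are `x, y, x, y, ...`. -/
inductive AltList (c : E → ℕ) : ℕ → ℕ → List E → Prop
  | nil (x y : ℕ) : AltList c x y []
  | cons {x y : ℕ} {e : E} {l : List E} (h : c e = x) (ht : AltList c y x l) :
      AltList c x y (e :: l)

theorem IsWalk.append_edge {ends : E → Sym2 V} {u w z : V} {l : List E} {g : E}
    (hw : IsWalk ends u w l) (hg : ends g = s(w, z)) : IsWalk ends u z (l ++ [g]) := by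
  induction hw with
  | nil v => exact IsWalk.cons hg (IsWalk.nil z)
  | cons h _ ih => exact IsWalk.cons h (ih hg)

theorem acount_eq [DecidableEq V] {ends : E → Sym2 V} (hloop : ∀ e : E, ¬ (ends e).IsDiag)
    {u w : V} {l : List E} (hw : IsWalk ends u w l) (x : V) :
    acount ends x l =
      (if x = u then (1:ℤ) else 0) - (-1) ^ l.length * (if x = w then 1 else 0) := by
  induction hw with
  | nil v => simp [acount]
  | @cons u v w e l h hw ih =>
    have huv : u ≠ v := by
      intro hEq; exact hloop e (by rw [h, hEq]; exact Sym2.mk_isDiag_iff.mpr rfl)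
    have hmem : (if x ∈ ends e then (1:ℤ) else 0)
        = (if x = u then (1:ℤ) else 0) + (if x = v then 1 else 0) := by
      rw [h]
      by_cases hxu : x = u <;> by_cases hxv : x = v <;>
        simp only [Sym2.mem_iff, hxu, hxv] <;> simp_all
    simp only [acount, List.length_cons, ih, hmem, pow_succ]
    ring

theorem walk_parity {ends : E → Sym2 V} (f : V → Bool)
    (hf : ∀ e : E, ∀ u v : V, ends e = s(u, v) → f u ≠ f v)
    {u w : V} {l : List E} (hw : IsWalk ends u w l) : (f u = f w ↔ Even l.length) := by
  induction hw with
  | nil v => simp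
  | @cons u v w e l h hw ih =>
    have h1 : f u ≠ f v := hf e u v h
    simp only [List.length_cons, Nat.even_add_one, ← ih]
    cases hu : f u <;> cases hv : f v <;> cases hww : f w <;> simp_all

theorem ndeg_pfl [DecidableEq V] (ends : E → Sym2 V) (x : V) (l : List E) :
    ndeg ends x (pfl true l) + ndeg ends x (pfl false l) = ndeg ends x l := by
  induction l with
  | nil => simp [pfl, ndeg]
  | cons e l ih => simp only [pfl, ndeg]; omega

theorem acount_pfl [DecidableEq V] (ends : E → Sym2 V) (x : V) (l : List E) :
    (ndeg ends x (pfl true l) : ℤ) - ndeg ends x (pfl false l) = acount ends x l := by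
  induction l with
  | nil => simp [pfl, ndeg, acount]
  | cons e l ih => simp only [pfl, ndeg, acount, ← ih]; push_cast; ring

theorem pfl_sublist (l : List E) : (pfl true l).Sublist l ∧ (pfl false l).Sublist l := by
  induction l with
  | nil => simp [pfl]
  | cons e l ih =>
    refine ⟨?_, ?_⟩
    · simpa [pfl] using List.Sublist.cons₂ e ih.2
    · simpa [pfl] using List.Sublist.cons e ih.1

theorem pfl_perm (l : List E) : List.Perm (pfl true l ++ pfl false l) l := by
  induction l with
  | nil => simp [pfl]
  | cons e l ih =>
    simp only [pfl, List.cons_append]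
    exact List.Perm.cons e ((List.perm_append_comm).trans ih)

theorem ndeg_pos [DecidableEq V] {ends : E → Sym2 V} {x : V} {l : List E}
    (h : 1 ≤ ndeg ends x l) : ∃ e ∈ l, x ∈ ends e := by
  induction l with
  | nil => simp [ndeg] at h
  | cons e l ih =>
    simp only [ndeg] at h
    by_cases hx : x ∈ ends e
    · exact ⟨e, List.mem_cons_self, hx⟩
    · simp only [hx, if_false] at h
      obtain ⟨e', he', hx'⟩ := ih (by omega)
      exact ⟨e', List.mem_cons_of_mem e he', hx'⟩

theorem ndeg_pos_of_mem [DecidableEq V] {ends : E → Sym2 V} {x : V} {l : List E} {e : E}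
    (he : e ∈ l) (hx : x ∈ ends e) : 1 ≤ ndeg ends x l := by
  induction l with
  | nil => simp at he
  | cons e' l ih =>
    rcases List.mem_cons.mp he with rfl | he'
    · simp [ndeg, hx]
    · simp only [ndeg]; have := ih he'; omega

theorem two_of_ndeg [DecidableEq V] {ends : E → Sym2 V} {x : V} {l : List E}
    (hnd : l.Nodup) (h : 2 ≤ ndeg ends x l) :
    ∃ e₁ ∈ l, ∃ e₂ ∈ l, e₁ ≠ e₂ ∧ x ∈ ends e₁ ∧ x ∈ ends e₂ := by
  induction l with
  | nil => simp [ndeg] at h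
  | cons e l ih =>
    simp only [ndeg] at h
    rcases List.nodup_cons.mp hnd with ⟨hel, hndl⟩
    by_cases hx : x ∈ ends e
    · have h1 : 1 ≤ ndeg ends x l := by simp [hx] at h; omega
      obtain ⟨e', he', hx'⟩ := ndeg_pos h1
      exact ⟨e, List.mem_cons_self, e', List.mem_cons_of_mem e he',
        fun hEq => hel (hEq ▸ he'), hx, hx'⟩
    · simp only [hx, if_false] at h
      obtain ⟨e₁, h₁, e₂, h₂, hne, hx₁, hx₂⟩ := ih hndl (by omega)
      exact ⟨e₁, List.mem_cons_of_mem e h₁, e₂, List.mem_cons_of_mem e h₂, hne, hx₁, hx₂⟩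

theorem degIn_toFinset [DecidableEq V] [DecidableEq E] (ends : E → Sym2 V) {l : List E}
    (hnd : l.Nodup) (x : V) : degIn ends l.toFinset x = ndeg ends x l := by
  induction l with
  | nil => simp [degIn, ndeg]
  | cons e l ih =>
    rcases List.nodup_cons.mp hnd with ⟨hel, hndl⟩
    simp only [List.toFinset_cons, degIn, Finset.filter_insert, ndeg]
    by_cases hx : x ∈ ends e
    · rw [if_pos hx, Finset.card_insert_of_notMem (by simp [hel])]
      simp only [hx, if_true, ← ih hndl, degIn]
      omega
    · rw [if_neg hx]
      simp [hx, ← ih hndl, degIn]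

theorem degIn_union [DecidableEq V] [DecidableEq E] (ends : E → Sym2 V) {A B : Finset E}
    (h : Disjoint A B) (x : V) :
    degIn ends (A ∪ B) x = degIn ends A x + degIn ends B x := by
  simp only [degIn, Finset.filter_union]
  exact Finset.card_union_of_disjoint (Finset.disjoint_filter_filter h)

theorem degIn_mono [DecidableEq V] [DecidableEq E] (ends : E → Sym2 V) {A B : Finset E}
    (h : A ⊆ B) (x : V) : degIn ends A x ≤ degIn ends B x :=
  Finset.card_le_card (Finset.filter_subset_filter _ h)

theorem degIn_erase [DecidableEq V] [DecidableEq E] (ends : E → Sym2 V) {A : Finset E} {e : E}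
    (he : e ∈ A) {x : V} (hx : x ∈ ends e) :
    degIn ends (A.erase e) x + 1 = degIn ends A x := by
  simp only [degIn, Finset.filter_erase]
  rw [Finset.card_erase_of_mem (by simp [he, hx])]
  have : 1 ≤ (Finset.filter (fun e => x ∈ ends e) A).card :=
    Finset.card_pos.mpr ⟨e, by simp [he, hx]⟩
  omega

theorem exists_maximal_trail [DecidableEq V] [DecidableEq E] (ends : E → Sym2 V)
    {A : Finset E} (hA : A.Nonempty) :
    ∃ (u w : V) (l : List E), IsWalk ends u w l ∧ l.Nodup ∧ (∀ e ∈ l, e ∈ A) ∧ l ≠ [] ∧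
      (∀ g ∈ A, g ∉ l → u ∉ ends g ∧ w ∉ ends g) := by
  classical
  set T : Set ℕ := {n | ∃ (u w : V) (l : List E),
    IsWalk ends u w l ∧ l.Nodup ∧ (∀ e ∈ l, e ∈ A) ∧ l.length = n} with hT
  have hbdd : BddAbove T := by
    refine ⟨A.card, fun n hn => ?_⟩
    obtain ⟨u, w, l, _, hnd, hmem, hlen⟩ := hn
    have h1 : l.toFinset ⊆ A := fun e he => hmem e (List.mem_toFinset.mp he)
    have := Finset.card_le_card h1
    rw [List.toFinset_card_of_nodup hnd] at this
    omega
  have hne : T.Nonempty := by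
    obtain ⟨e, he⟩ := hA
    obtain ⟨u, v, huv⟩ : ∃ u v, ends e = s(u, v) := by
      induction (ends e) using Sym2.ind with | _ x y => exact ⟨x, y, rfl⟩
    exact ⟨1, u, v, [e], IsWalk.cons huv (IsWalk.nil v), by simp, by simp [he], rfl⟩
  obtain ⟨u, w, l, hwalk, hnd, hmem, hlen⟩ := Nat.sSup_mem hne hbdd
  have hmax : ∀ n ∈ T, n ≤ sSup T := fun n hn => le_csSup hbdd hn
  have hlne : l ≠ [] := by
    intro h
    obtain ⟨n, hn⟩ := hne
    have h1 := hmax 1 (by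
      obtain ⟨e, he⟩ := hA
      obtain ⟨u', v', huv⟩ : ∃ u' v', ends e = s(u', v') := by
        induction (ends e) using Sym2.ind with | _ x y => exact ⟨x, y, rfl⟩
      exact ⟨u', v', [e], IsWalk.cons huv (IsWalk.nil v'), by simp, by simp [he], rfl⟩)
    rw [← hlen, h] at h1
    simp at h1
  refine ⟨u, w, l, hwalk, hnd, hmem, hlne, fun g hg hgl => ⟨fun hu => ?_, fun hw => ?_⟩⟩
  · obtain ⟨z, hz⟩ := Sym2.mem_iff_exists.mp hu
    have : (g :: l).length ∈ T :=
      ⟨z, w, g :: l, IsWalk.cons (by rw [hz, Sym2.eq_swap]) hwalk,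
        List.nodup_cons.mpr ⟨hgl, hnd⟩, by
          intro e he
          rcases List.mem_cons.mp he with rfl | h
          · exact hg
          · exact hmem e h, rfl⟩
    have := hmax _ this
    simp [hlen] at this
  · obtain ⟨z, hz⟩ := Sym2.mem_iff_exists.mp hw
    have : (l ++ [g]).length ∈ T :=
      ⟨u, z, l ++ [g], hwalk.append_edge hz,
        by simp [List.nodup_append, hnd, hgl]; rintro a ha rfl; exact hgl ha,
        by
          intro e he
          rcases List.mem_append.mp he with h | h
          · exact hmem e h
          · rw [List.mem_singleton.mp h]; exact hg, rfl⟩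
    have := hmax _ this
    simp [hlen] at this

theorem euler_split [DecidableEq V] [DecidableEq E] (ends : E → Sym2 V)
    (hloop : ∀ e : E, ¬ (ends e).IsDiag) (f : V → Bool)
    (hf : ∀ e : E, ∀ u v : V, ends e = s(u, v) → f u ≠ f v) (A : Finset E) :
    ∃ A₁ ⊆ A, ∀ v : V, 2 * degIn ends A₁ v ≤ degIn ends A v + 1 ∧
      2 * degIn ends (A \ A₁) v ≤ degIn ends A v + 1 := by
  classical
  induction A using Finset.strongInduction with
  | _ A ih =>
  rcases A.eq_empty_or_nonempty with rfl | hA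
  · exact ⟨∅, Finset.Subset.refl _, fun v => by simp [degIn]⟩
  obtain ⟨u, w, l, hwalk, hnd, hmem, hlne, hmaxl⟩ := exists_maximal_trail ends hA
  set A' : Finset E := A \ l.toFinset with hA'
  have hlsub : l.toFinset ⊆ A := fun e he => hmem e (List.mem_toFinset.mp he)
  have hssub : A' ⊂ A := by
    obtain ⟨e, hel⟩ := List.exists_mem_of_ne_nil l hlne
    refine Finset.ssubset_iff_of_subset (Finset.sdiff_subset) |>.mpr ⟨e, hmem e hel, ?_⟩
    simp [hA', hmem e hel, hel]
  obtain ⟨A₁', hsub', hbound'⟩ := ih A' hssub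
  set P : Finset E := (pfl true l).toFinset with hP
  set Q : Finset E := (pfl false l).toFinset with hQ
  have hPQ : P ∪ Q = l.toFinset := by
    rw [hP, hQ, ← List.toFinset_append]
    exact List.toFinset_eq_of_perm _ _ (pfl_perm l)
  have hPQdisj : Disjoint P Q := by
    have hnd2 : (pfl true l ++ pfl false l).Nodup := (pfl_perm l).symm.nodup hnd
    rw [List.nodup_append] at hnd2
    rw [hP, hQ, Finset.disjoint_left]
    intro a ha hb
    exact hnd2.2.2 _ (List.mem_toFinset.mp ha) _ (List.mem_toFinset.mp hb) rfl
  have hdisjA'l : Disjoint A' l.toFinset := Finset.sdiff_disjoint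
  have hAeq : A = A' ∪ l.toFinset := by
    rw [hA', Finset.sdiff_union_of_subset hlsub]
  refine ⟨A₁' ∪ P, ?_, fun v => ?_⟩
  · rw [hAeq]
    exact Finset.union_subset_union hsub' (hPQ ▸ Finset.subset_union_left)
  -- set complement identity
  have hcomp : A \ (A₁' ∪ P) = (A' \ A₁') ∪ Q := by
    ext x
    simp only [Finset.mem_sdiff, Finset.mem_union]
    constructor
    · rintro ⟨hxA, hx⟩
      push_neg at hx
      by_cases hxl : x ∈ l.toFinset
      · right
        rcases Finset.mem_union.mp (show x ∈ P ∪ Q by rw [hPQ]; exact hxl) with h | h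
        · exact absurd h hx.2
        · exact h
      · exact Or.inl ⟨by simp [hA', hxA, hxl], hx.1⟩
    · rintro (⟨hx1, hx2⟩ | hxQ)
      · rw [hA'] at hx1
        have := Finset.mem_sdiff.mp hx1
        refine ⟨this.1, ?_⟩
        push_neg
        exact ⟨hx2, fun hP' => this.2 (hPQ ▸ Finset.mem_union_left _ hP')⟩
      · have hxl : x ∈ l.toFinset := hPQ ▸ Finset.mem_union_right _ hxQ
        refine ⟨hlsub hxl, ?_⟩
        push_neg
        refine ⟨fun hx1 => ?_, fun hxP => Finset.disjoint_left.mp hPQdisj hxP hxQ⟩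
        exact (Finset.mem_sdiff.mp (hsub' hx1)).2 hxl
  have hdisj1 : Disjoint A₁' P := by
    refine Finset.disjoint_left.mpr fun x hx hxP => ?_
    exact (Finset.mem_sdiff.mp (hsub' hx)).2 (hPQ ▸ Finset.mem_union_left _ hxP)
  have hdisj2 : Disjoint (A' \ A₁') Q := by
    refine Finset.disjoint_left.mpr fun x hx hxQ => ?_
    exact (Finset.mem_sdiff.mp (Finset.mem_sdiff.mp hx).1).2 (hPQ ▸ Finset.mem_union_right _ hxQ)
  -- degree identities
  have hdA : degIn ends A v = degIn ends A' v + ndeg ends v l := by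
    rw [hAeq, degIn_union ends hdisjA'l, degIn_toFinset ends hnd]
  have hd1 : degIn ends (A₁' ∪ P) v = degIn ends A₁' v + ndeg ends v (pfl true l) := by
    rw [degIn_union ends hdisj1, hP, degIn_toFinset ends ((pfl_sublist l).1.nodup hnd)]
  have hd2 : degIn ends (A \ (A₁' ∪ P)) v
      = degIn ends (A' \ A₁') v + ndeg ends v (pfl false l) := by
    rw [hcomp, degIn_union ends hdisj2, hQ, degIn_toFinset ends ((pfl_sublist l).2.nodup hnd)]
  -- complement bound from ih : note degIn (A' \ A₁') v = degIn A' v - degIn A₁' v bounds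
  have hihv := hbound' v
  -- acount facts
  have hac := acount_eq hloop hwalk v
  have hsplit := ndeg_pfl ends v l
  have hacpfl := acount_pfl ends v l
  have hkey : acount ends v l = 0 ∨
      (degIn ends A' v = 0 ∧ -1 ≤ acount ends v l ∧ acount ends v l ≤ 1) := by
    by_cases huw : u = w
    · left
      have hev : Even l.length := (walk_parity f hf hwalk).mp (by rw [huw])
      rw [hac, hev.neg_one_pow, huw]
      split_ifs <;> ring
    · by_cases hvu : v = u
      · right
        have hA'0 : degIn ends A' v = 0 := by
          rw [degIn]
          refine Finset.card_eq_zero.mpr (Finset.filter_eq_empty_iff.mpr fun g hg => ?_)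
          have hg' := Finset.mem_sdiff.mp hg
          exact (hmaxl g hg'.1 (fun hl => hg'.2 (List.mem_toFinset.mpr hl))).1.elim
            ∘ (hvu ▸ ·)
        have hvw : v ≠ w := fun h => huw (hvu ▸ h)
        refine ⟨hA'0, ?_, ?_⟩ <;> rw [hac] <;> simp [hvu, hvw, huw]
      · by_cases hvw : v = w
        · right
          have hA'0 : degIn ends A' v = 0 := by
            rw [degIn]
            refine Finset.card_eq_zero.mpr (Finset.filter_eq_empty_iff.mpr fun g hg => ?_)
            have hg' := Finset.mem_sdiff.mp hg
            exact (hmaxl g hg'.1 (fun hl => hg'.2 (List.mem_toFinset.mpr hl))).2.elim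
              ∘ (hvw ▸ ·)
          refine ⟨hA'0, ?_, ?_⟩ <;>
            · rw [hac]
              simp only [if_neg hvu, if_pos hvw]
              rcases Nat.even_or_odd l.length with he | ho
              · rw [he.neg_one_pow]; norm_num
              · rw [ho.neg_one_pow]; norm_num
        · left
          rw [hac]
          simp [hvu, hvw]
  -- final arithmetic
  constructor <;> rw [hdA] <;> [rw [hd1]; rw [hd2]] <;>
  · have h1 : (ndeg ends v (pfl true l) : ℤ) - ndeg ends v (pfl false l) = acount ends v l :=
      hacpfl
    have h2 : ndeg ends v (pfl true l) + ndeg ends v (pfl false l) = ndeg ends v l := hsplit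
    have h3 : degIn ends A₁' v ≤ degIn ends A' v := degIn_mono ends hsub' v
    have h4 : degIn ends (A' \ A₁') v ≤ degIn ends A' v := degIn_mono ends Finset.sdiff_subset v
    rcases hkey with h | ⟨h0, hlo, hhi⟩ <;>
      [skip; (have h5 : degIn ends A₁' v = 0 := by omega;
              have h6 : degIn ends (A' \ A₁') v = 0 := by
                have := degIn_mono ends (Finset.sdiff_subset (s := A') (t := A₁')) v; omega)] <;>
    omega

theorem AltList.append {c : E → ℕ} {x y : ℕ} {l : List E} (h : AltList c x y l) {g : E}
    (hg : c g = if Even l.length then x else y) : AltList c x y (l ++ [g]) := by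
  induction h with
  | nil x y => simpa using AltList.cons (by simpa using hg) (AltList.nil y x)
  | @cons x y e l he ht ih =>
    simp only [List.length_cons, Nat.even_add_one] at hg
    refine AltList.cons he (ih ?_)
    by_cases hev : Even l.length <;> simp [hev] at hg ⊢ <;> exact hg

theorem AltList.mem_col {c : E → ℕ} {x y : ℕ} {l : List E} (h : AltList c x y l) :
    ∀ e ∈ l, c e = x ∨ c e = y := by
  induction h with
  | nil => simp
  | @cons x y e l he ht ih =>
    intro e' he'
    rcases List.mem_cons.mp he' with rfl | h'
    · exact Or.inl he
    · exact (ih e' h').symm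

theorem AltList.pfl_col {c : E → ℕ} {x y : ℕ} {l : List E} (h : AltList c x y l) :
    (∀ e ∈ pfl true l, c e = x) ∧ ∀ e ∈ pfl false l, c e = y := by
  induction h with
  | nil => simp [pfl]
  | @cons x y e l he ht ih =>
    refine ⟨fun e' he' => ?_, fun e' he' => ih.1 e' (by simpa [pfl] using he')⟩
    rcases List.mem_cons.mp (by simpa [pfl] using he') with rfl | h'
    · exact he
    · exact ih.2 e' h'

theorem IsWalk.head_mem {ends : E → Sym2 V} {u w : V} {e : E} {l : List E}
    (h : IsWalk ends u w (e :: l)) : u ∈ ends e := by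
  cases h with | cons h _ => rw [h]; exact Sym2.mem_mk_left _ _

theorem AltList.head_col {c : E → ℕ} {x y : ℕ} {e : E} {l : List E}
    (h : AltList c x y (e :: l)) : c e = x := by
  cases h with | cons h _ => exact h

theorem degIn_le_of_colorable [DecidableEq V] {ends : E → Sym2 V}
    {A : Finset E} {k : ℕ} (h : EdgeColorable ends A k) (v : V) : degIn ends A v ≤ k := by
  obtain ⟨c, hlt, hprop⟩ := h
  calc degIn ends A v ≤ (Finset.range k).card := by
        refine Finset.card_le_card_of_injOn c
          (fun g hg => Finset.mem_range.mpr (hlt g (Finset.mem_filter.mp hg).1)) ?_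
        intro g₁ h₁ g₂ h₂ hEq
        by_contra hne
        have m₁ := Finset.mem_filter.mp (Finset.mem_coe.mp h₁)
        have m₂ := Finset.mem_filter.mp (Finset.mem_coe.mp h₂)
        exact hprop g₁ m₁.1 g₂ m₂.1 hne ⟨v, m₁.2, m₂.2⟩ hEq
    _ = k := Finset.card_range k

theorem koenig [DecidableEq V] [DecidableEq E] (ends : E → Sym2 V)
    (hloop : ∀ e : E, ¬ (ends e).IsDiag) (f : V → Bool)
    (hf : ∀ e : E, ∀ u v : V, ends e = s(u, v) → f u ≠ f v) (k : ℕ) (A : Finset E)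
    (hdeg : ∀ v : V, degIn ends A v ≤ k) : EdgeColorable ends A k := by
  classical
  revert hdeg
  induction A using Finset.strongInduction with
  | _ A ih =>
  intro hdeg
  rcases A.eq_empty_or_nonempty with rfl | hA
  · exact ⟨fun _ => 0, by simp, by simp⟩
  obtain ⟨e₀, he₀⟩ := hA
  obtain ⟨u, v, huv⟩ : ∃ u v, ends e₀ = s(u, v) := by
    induction (ends e₀) using Sym2.ind with | _ x y => exact ⟨x, y, rfl⟩
  have hune : u ≠ v := fun h => hloop e₀ (by rw [huv, h]; exact Sym2.mk_isDiag_iff.mpr rfl)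
  set A' := A.erase e₀ with hA'
  have hssub : A' ⊂ A := Finset.erase_ssubset he₀
  obtain ⟨c, hclt, hcprop⟩ := ih A' hssub
    (fun v' => le_trans (degIn_mono ends (Finset.erase_subset _ _) v') (hdeg v'))
  have hmemu : u ∈ ends e₀ := by rw [huv]; exact Sym2.mem_mk_left u v
  have hmemv : v ∈ ends e₀ := by rw [huv]; exact Sym2.mem_mk_right u v
  have hdu : degIn ends A' u + 1 = degIn ends A u := degIn_erase ends he₀ hmemu
  have hdv : degIn ends A' v + 1 = degIn ends A v := degIn_erase ends he₀ hmemv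
  -- a color < k missing at a vertex of degree < k
  have hfree : ∀ x : V, degIn ends A' x + 1 ≤ k →
      ∃ a < k, ∀ g ∈ A', x ∈ ends g → c g ≠ a := by
    intro x hx
    have hcard : ((A'.filter (fun g => x ∈ ends g)).image c).card < k :=
      lt_of_le_of_lt Finset.card_image_le (by
        have : (A'.filter (fun g => x ∈ ends g)).card = degIn ends A' x := rfl
        omega)
    have hnotsub : ¬ (Finset.range k ⊆ (A'.filter (fun g => x ∈ ends g)).image c) := by
      intro h
      have := Finset.card_le_card h
      rw [Finset.card_range] at this
      omega
    obtain ⟨a, ha, hna⟩ := Finset.not_subset.mp hnotsub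
    exact ⟨a, Finset.mem_range.mp ha, fun g hg hxg hc =>
      hna (Finset.mem_image.mpr ⟨g, Finset.mem_filter.mpr ⟨hg, hxg⟩, hc⟩)⟩
  obtain ⟨a, hak, hfa⟩ := hfree u (by have := hdeg u; omega)
  -- given a coloring of A' proper, with `col` free at both `u` and `v`, finish
  have hfinish : ∀ (c' : E → ℕ), (∀ g ∈ A', c' g < k) →
      (∀ g₁ ∈ A', ∀ g₂ ∈ A', g₁ ≠ g₂ → (∃ x, x ∈ ends g₁ ∧ x ∈ ends g₂) → c' g₁ ≠ c' g₂) →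
      ∀ col, col < k → (∀ g ∈ A', u ∈ ends g → c' g ≠ col) →
      (∀ g ∈ A', v ∈ ends g → c' g ≠ col) → EdgeColorable ends A k := by
    intro c' hlt hprop col hcol hfu hfv
    refine ⟨fun g => if g = e₀ then col else c' g, ?_, ?_⟩
    · intro g hg
      show (if g = e₀ then col else c' g) < k
      by_cases h : g = e₀
      · simpa [h] using hcol
      · rw [if_neg h]; exact hlt g (Finset.mem_erase.mpr ⟨h, hg⟩)
    · rintro g₁ hg₁ g₂ hg₂ hne ⟨x, hx₁, hx₂⟩
      show (if g₁ = e₀ then col else c' g₁) ≠ (if g₂ = e₀ then col else c' g₂)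
      by_cases h₁ : g₁ = e₀ <;> by_cases h₂ : g₂ = e₀
      · exact absurd (h₁.trans h₂.symm) hne
      · subst h₁
        rw [if_pos rfl, if_neg h₂]
        have hg₂' : g₂ ∈ A' := Finset.mem_erase.mpr ⟨h₂, hg₂⟩
        rcases Sym2.mem_iff.mp (huv ▸ hx₁ : x ∈ s(u, v)) with rfl | rfl
        · exact fun h => hfu g₂ hg₂' hx₂ h.symm
        · exact fun h => hfv g₂ hg₂' hx₂ h.symm
      · subst h₂
        rw [if_neg h₁, if_pos rfl]
        have hg₁' : g₁ ∈ A' := Finset.mem_erase.mpr ⟨h₁, hg₁⟩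
        rcases Sym2.mem_iff.mp (huv ▸ hx₂ : x ∈ s(u, v)) with rfl | rfl
        · exact hfu g₁ hg₁' hx₁
        · exact hfv g₁ hg₁' hx₁
      · rw [if_neg h₁, if_neg h₂]
        exact hprop g₁ (Finset.mem_erase.mpr ⟨h₁, hg₁⟩) g₂ (Finset.mem_erase.mpr ⟨h₂, hg₂⟩)
          hne ⟨x, hx₁, hx₂⟩
  by_cases hav : ∀ g ∈ A', v ∈ ends g → c g ≠ a
  · exact hfinish c hclt hcprop a hak hfa hav
  obtain ⟨b, hbk, hfb⟩ := hfree v (by have := hdeg v; omega)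
  have hab : a ≠ b := fun h => hav (h ▸ hfb)
  -- maximum alternating trail from u with colors b, a, b, a, ...
  set T : Set ℕ := {n | ∃ (w : V) (l : List E), IsWalk ends u w l ∧ l.Nodup ∧
      (∀ g ∈ l, g ∈ A') ∧ AltList c b a l ∧ l.length = n} with hT
  have hbdd : BddAbove T := ⟨A'.card, fun n hn => by
    obtain ⟨w, l, _, hnd, hmem, _, hlen⟩ := hn
    have h1 : l.toFinset ⊆ A' := fun g hg => hmem g (List.mem_toFinset.mp hg)
    have := Finset.card_le_card h1
    rw [List.toFinset_card_of_nodup hnd] at this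
    omega⟩
  have hTne : T.Nonempty := ⟨0, u, [], IsWalk.nil u, by simp, by simp, AltList.nil b a, rfl⟩
  obtain ⟨w, l, hwalk, hnd, hmemA, halt, hlen⟩ := Nat.sSup_mem hTne hbdd
  have hmax : ∀ n ∈ T, n ≤ sSup T := fun n hn => le_csSup hbdd hn
  have huniq : ∀ (x : V) (g₁ g₂ : E), g₁ ∈ A' → g₂ ∈ A' → x ∈ ends g₁ → x ∈ ends g₂ →
      g₁ ≠ g₂ → c g₁ ≠ c g₂ := fun x g₁ g₂ h₁ h₂ hx₁ hx₂ hne =>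
    hcprop g₁ h₁ g₂ h₂ hne ⟨x, hx₁, hx₂⟩
  have hcolb : ∀ g ∈ pfl true l, c g = b := halt.pfl_col.1
  have hcola : ∀ g ∈ pfl false l, c g = a := halt.pfl_col.2
  have hsubT : (pfl true l).Sublist l := (pfl_sublist l).1
  have hsubF : (pfl false l).Sublist l := (pfl_sublist l).2
  have hcb1 : ∀ x : V, ndeg ends x (pfl true l) ≤ 1 := by
    intro x; by_contra h
    obtain ⟨g₁, h₁, g₂, h₂, hne, hx₁, hx₂⟩ := two_of_ndeg (ends := ends) (x := x) (hsubT.nodup hnd) (by omega)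
    exact huniq x g₁ g₂ (hmemA g₁ (hsubT.subset h₁)) (hmemA g₂ (hsubT.subset h₂)) hx₁ hx₂ hne
      ((hcolb g₁ h₁).trans (hcolb g₂ h₂).symm)
  have hca1 : ∀ x : V, ndeg ends x (pfl false l) ≤ 1 := by
    intro x; by_contra h
    obtain ⟨g₁, h₁, g₂, h₂, hne, hx₁, hx₂⟩ := two_of_ndeg (ends := ends) (x := x) (hsubF.nodup hnd) (by omega)
    exact huniq x g₁ g₂ (hmemA g₁ (hsubF.subset h₁)) (hmemA g₂ (hsubF.subset h₂)) hx₁ hx₂ hne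
      ((hcola g₁ h₁).trans (hcola g₂ h₂).symm)
  -- closure: any a/b-colored edge of A' touching the trail is on the trail
  have hclose : ∀ (x : V) (g : E), g ∈ A' → x ∈ ends g → (c g = a ∨ c g = b) →
      (∃ e' ∈ l, x ∈ ends e') → g ∈ l := by
    rintro x g hgA hxg hcg ⟨e', he', hxe'⟩
    by_contra hgl
    have hd1 : 1 ≤ ndeg ends x l := ndeg_pos_of_mem he' hxe'
    have hsplit := ndeg_pfl ends x l
    have heq := acount_eq hloop hwalk x
    rcases hcg with hca | hcb
    · have hf0 : ndeg ends x (pfl false l) = 0 := by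
        by_contra h
        obtain ⟨g', hg', hxg'⟩ := ndeg_pos (ends := ends) (x := x) (l := pfl false l) (by omega)
        exact huniq x g g' hgA (hmemA g' (hsubF.subset hg')) hxg hxg'
          (fun hEq => hgl (hEq ▸ hsubF.subset hg')) (by rw [hca, hcola g' hg'])
      have hteq : ndeg ends x (pfl true l) = 1 := by have := hcb1 x; omega
      have hax : acount ends x l = 1 := by rw [← acount_pfl, hteq, hf0]; norm_num
      rw [hax] at heq
      by_cases hxu : x = u
      · exact hfa g hgA (hxu ▸ hxg) hca
      · by_cases hxw : x = w
        · rw [if_neg hxu, if_pos hxw] at heq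
          have hodd : ¬ Even l.length := by
            intro hev; rw [hev.neg_one_pow] at heq; norm_num at heq
          obtain ⟨z, hz⟩ := Sym2.mem_iff_exists.mp (hxw ▸ hxg : w ∈ ends g)
          have hTn : (l ++ [g]).length ∈ T := ⟨z, l ++ [g], hwalk.append_edge hz,
            by simp [List.nodup_append, hnd, hgl]; rintro a ha rfl; exact hgl ha,
            by intro e'' he''
               rcases List.mem_append.mp he'' with h | h
               · exact hmemA e'' h
               · rw [List.mem_singleton.mp h]; exact hgA,
            halt.append (by rw [if_neg hodd]; exact hca), rfl⟩
          have := hmax _ hTn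
          rw [← hlen] at this
          simp at this
        · rw [if_neg hxu, if_neg hxw] at heq; norm_num at heq
    · have ht0 : ndeg ends x (pfl true l) = 0 := by
        by_contra h
        obtain ⟨g', hg', hxg'⟩ := ndeg_pos (ends := ends) (x := x) (l := pfl true l) (by omega)
        exact huniq x g g' hgA (hmemA g' (hsubT.subset hg')) hxg hxg'
          (fun hEq => hgl (hEq ▸ hsubT.subset hg')) (by rw [hcb, hcolb g' hg'])
      have hfeq : ndeg ends x (pfl false l) = 1 := by have := hca1 x; omega
      have hax : acount ends x l = -1 := by rw [← acount_pfl, hfeq, ht0]; norm_num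
      rw [hax] at heq
      by_cases hxu : x = u
      · rw [if_pos hxu] at heq
        by_cases hxw : x = w
        · rw [if_pos hxw] at heq
          rcases Nat.even_or_odd l.length with he | ho
          · rw [he.neg_one_pow] at heq; norm_num at heq
          · rw [ho.neg_one_pow] at heq; norm_num at heq
        · rw [if_neg hxw] at heq; norm_num at heq
      · by_cases hxw : x = w
        · rw [if_neg hxu, if_pos hxw] at heq
          have hev : Even l.length := by
            rcases Nat.even_or_odd l.length with he | ho
            · exact he
            · rw [ho.neg_one_pow] at heq; norm_num at heq
          obtain ⟨z, hz⟩ := Sym2.mem_iff_exists.mp (hxw ▸ hxg : w ∈ ends g)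
          have hTn : (l ++ [g]).length ∈ T := ⟨z, l ++ [g], hwalk.append_edge hz,
            by simp [List.nodup_append, hnd, hgl]; rintro a ha rfl; exact hgl ha,
            by intro e'' he''
               rcases List.mem_append.mp he'' with h | h
               · exact hmemA e'' h
               · rw [List.mem_singleton.mp h]; exact hgA,
            halt.append (by rw [if_pos hev]; exact hcb), rfl⟩
          have := hmax _ hTn
          rw [← hlen] at this
          simp at this
        · rw [if_neg hxu, if_neg hxw] at heq; norm_num at heq
  -- the swapped coloring
  set swapc : ℕ → ℕ := fun t => if t = a then b else if t = b then a else t with hswapc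
  set c' : E → ℕ := fun g => if g ∈ l then swapc (c g) else c g with hc'
  have hswa : swapc a = b := by simp [hswapc]
  have hswb : swapc b = a := by simp [hswapc, Ne.symm hab]
  have hswinj : ∀ s t : ℕ, s ≠ t → swapc s ≠ swapc t := by
    intro s t hst
    simp only [hswapc]
    split_ifs <;> omega
  have hcol_mem : ∀ g ∈ l, c g = a ∨ c g = b := fun g hg => (halt.mem_col g hg).symm
  have hclt' : ∀ g ∈ A', c' g < k := by
    intro g hg
    simp only [hc']
    split_ifs with hgl
    · simp only [hswapc]
      split_ifs
      · exact hbk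
      · exact hak
      · exact hclt g hg
    · exact hclt g hg
  have hprop' : ∀ g₁ ∈ A', ∀ g₂ ∈ A', g₁ ≠ g₂ →
      (∃ x, x ∈ ends g₁ ∧ x ∈ ends g₂) → c' g₁ ≠ c' g₂ := by
    rintro g₁ h₁ g₂ h₂ hne ⟨x, hx₁, hx₂⟩
    have hbase := hcprop g₁ h₁ g₂ h₂ hne ⟨x, hx₁, hx₂⟩
    simp only [hc']
    by_cases hl₁ : g₁ ∈ l <;> by_cases hl₂ : g₂ ∈ l
    · rw [if_pos hl₁, if_pos hl₂]; exact hswinj _ _ hbase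
    · rw [if_pos hl₁, if_neg hl₂]
      intro hEq
      have h₂ab : c g₂ = a ∨ c g₂ = b := by
        rcases hcol_mem g₁ hl₁ with h | h
        · rw [h, hswa] at hEq; exact Or.inr hEq.symm
        · rw [h, hswb] at hEq; exact Or.inl hEq.symm
      exact hl₂ (hclose x g₂ h₂ hx₂ h₂ab ⟨g₁, hl₁, hx₁⟩)
    · rw [if_neg hl₁, if_pos hl₂]
      intro hEq
      have h₁ab : c g₁ = a ∨ c g₁ = b := by
        rcases hcol_mem g₂ hl₂ with h | h
        · rw [h, hswa] at hEq; exact Or.inr hEq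
        · rw [h, hswb] at hEq; exact Or.inl hEq
      exact hl₁ (hclose x g₁ h₁ hx₁ h₁ab ⟨g₂, hl₂, hx₂⟩)
    · rw [if_neg hl₁, if_neg hl₂]; exact hbase
  have hfu' : ∀ g ∈ A', u ∈ ends g → c' g ≠ b := by
    intro g hg hug
    simp only [hc']
    split_ifs with hgl
    · rcases hcol_mem g hgl with h | h
      · exact absurd h (hfa g hg hug)
      · rw [h, hswb]; omega
    · intro hEq
      rcases hl : l with _ | ⟨e₁, l₁⟩
      · obtain ⟨z, hz⟩ := Sym2.mem_iff_exists.mp hug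
        have hTn : (1:ℕ) ∈ T := ⟨z, [g], IsWalk.cons hz (IsWalk.nil z), by simp,
          by simp [hg], AltList.cons hEq (AltList.nil a b), rfl⟩
        have := hmax _ hTn
        rw [← hlen, hl] at this
        simp at this
      · have hwalk' : IsWalk ends u w (e₁ :: l₁) := hl ▸ hwalk
        have halt' : AltList c b a (e₁ :: l₁) := hl ▸ halt
        have he₁l : e₁ ∈ l := by rw [hl]; exact List.mem_cons_self
        exact huniq u g e₁ hg (hmemA e₁ he₁l) hug hwalk'.head_mem
          (fun h' => hgl (h' ▸ he₁l)) (by rw [hEq, halt'.head_col])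
  have hfv' : ∀ g ∈ A', v ∈ ends g → c' g ≠ b := by
    intro g hg hvg
    simp only [hc']
    split_ifs with hgl
    · rcases hcol_mem g hgl with h | h
      · exfalso
        have hgf : g ∈ pfl false l := by
          rcases List.mem_append.mp ((pfl_perm l).mem_iff.mpr hgl) with h' | h'
          · exact absurd (h.symm.trans (hcolb g h')) hab
          · exact h'
        have hfpos : 1 ≤ ndeg ends v (pfl false l) := ndeg_pos_of_mem hgf hvg
        have ht0 : ndeg ends v (pfl true l) = 0 := by
          by_contra h'
          obtain ⟨g', hg', hvg'⟩ := ndeg_pos (ends := ends) (x := v) (l := pfl true l) (by omega)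
          exact hfb g' (hmemA g' (hsubT.subset hg')) hvg' (hcolb g' hg')
        have hf1 : ndeg ends v (pfl false l) = 1 := le_antisymm (hca1 v) hfpos
        have hax : acount ends v l = -1 := by rw [← acount_pfl, ht0, hf1]; norm_num
        have heq := acount_eq hloop hwalk v
        rw [hax, if_neg (Ne.symm hune)] at heq
        by_cases hvw : v = w
        · rw [if_pos hvw] at heq
          have hev : Even l.length := by
            rcases Nat.even_or_odd l.length with he | ho
            · exact he
            · rw [ho.neg_one_pow] at heq; norm_num at heq
          have hfw : f u = f w := (walk_parity f hf hwalk).mpr hev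
          exact hf e₀ u v huv (by rw [hvw]; exact hfw)
        · rw [if_neg hvw] at heq; norm_num at heq
      · rw [h, hswb]; omega
    · exact hfb g hg hvg
  exact hfinish c' hclt' hprop' b hbk hfu' hfv'

end Stmt8Aux

/-- For a finite bipartite loopless multigraph `G` and `k ≥ 1`:
`2 ν_k(G) ≥ ν_{k-1}(G) + ν_{k+1}(G)`. -/
theorem stmt_8 [Fintype V] [Fintype E] [DecidableEq V] (ends : E → Sym2 V)
    (hloop : ∀ e : E, ¬ (ends e).IsDiag) (hbip : IsBipartite ends)
    (k : ℕ) (hk : 1 ≤ k) :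
    2 * nu ends (Finset.univ : Finset E) k ≥
      nu ends (Finset.univ : Finset E) (k - 1) +
        nu ends (Finset.univ : Finset E) (k + 1) := by
  classical
  obtain ⟨f, hf⟩ := hbip
  have hbddS : ∀ k' : ℕ, BddAbove {n | ∃ F : Finset E,
      F ⊆ Finset.univ ∧ EdgeColorable ends F k' ∧ F.card = n} := by
    intro k'
    refine ⟨Fintype.card E, ?_⟩
    rintro n ⟨F, -, -, rfl⟩
    exact Finset.card_le_univ F
  have hSne : ∀ k' : ℕ, ({n | ∃ F : Finset E,
      F ⊆ Finset.univ ∧ EdgeColorable ends F k' ∧ F.card = n} : Set ℕ).Nonempty :=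
    fun k' => ⟨0, ∅, Finset.empty_subset _, ⟨fun _ => 0, by simp, by simp⟩, rfl⟩
  have hnu_mem : ∀ k' : ℕ, ∃ F : Finset E, F ⊆ Finset.univ ∧ EdgeColorable ends F k' ∧
      F.card = nu ends Finset.univ k' := fun k' => Nat.sSup_mem (hSne k') (hbddS k')
  have hnu_ge : ∀ (k' : ℕ) (F : Finset E), EdgeColorable ends F k' →
      F.card ≤ nu ends Finset.univ k' :=
    fun k' F hF => le_csSup (hbddS k') ⟨F, Finset.subset_univ F, hF, rfl⟩
  obtain ⟨F₁, -, hcol₁, hcard₁⟩ := hnu_mem (k - 1)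
  obtain ⟨F₂, -, hcol₂, hcard₂⟩ := hnu_mem (k + 1)
  have hdeg₁ : ∀ v, degIn ends F₁ v ≤ k - 1 := Stmt8Aux.degIn_le_of_colorable hcol₁
  have hdeg₂ : ∀ v, degIn ends F₂ v ≤ k + 1 := Stmt8Aux.degIn_le_of_colorable hcol₂
  set B := F₁ ∩ F₂ with hB
  set P := F₁ \ F₂ with hP
  set Q := F₂ \ F₁ with hQ
  set M := P ∪ Q with hM
  have hdisjPQ : Disjoint P Q := disjoint_sdiff_sdiff
  have hBP : Disjoint B P := Finset.disjoint_left.mpr fun x hx hx' =>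
    (Finset.mem_sdiff.mp hx').2 (Finset.mem_inter.mp hx).2
  have hBQ : Disjoint B Q := Finset.disjoint_left.mpr fun x hx hx' =>
    (Finset.mem_sdiff.mp hx').2 (Finset.mem_inter.mp hx).1
  have hBM : Disjoint B M := Finset.disjoint_union_right.mpr ⟨hBP, hBQ⟩
  have hF₁ : F₁ = B ∪ P := by
    ext x
    simp only [hB, hP, Finset.mem_union, Finset.mem_inter, Finset.mem_sdiff]
    tauto
  have hF₂ : F₂ = B ∪ Q := by
    ext x
    simp only [hB, hQ, Finset.mem_union, Finset.mem_inter, Finset.mem_sdiff]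
    tauto
  obtain ⟨M₁, hM₁sub, hMsplit⟩ := Stmt8Aux.euler_split ends hloop f hf M
  have hM₂sub : M \ M₁ ⊆ M := Finset.sdiff_subset
  have hBM₁ : Disjoint B M₁ := hBM.mono_right hM₁sub
  have hBM₂ : Disjoint B (M \ M₁) := hBM.mono_right hM₂sub
  -- degree bounds for the two combined graphs
  have hdegC : ∀ (N : Finset E), N ⊆ M → (∀ v, 2 * degIn ends N v ≤ degIn ends M v + 1) →
      ∀ v, degIn ends (B ∪ N) v ≤ k := by
    intro N hNsub hNb v
    have h1 : degIn ends (B ∪ N) v = degIn ends B v + degIn ends N v :=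
      Stmt8Aux.degIn_union ends (hBM.mono_right hNsub) v
    have h2 : degIn ends M v = degIn ends P v + degIn ends Q v :=
      Stmt8Aux.degIn_union ends hdisjPQ v
    have h3 : degIn ends F₁ v = degIn ends B v + degIn ends P v := by
      rw [hF₁]; exact Stmt8Aux.degIn_union ends hBP v
    have h4 : degIn ends F₂ v = degIn ends B v + degIn ends Q v := by
      rw [hF₂]; exact Stmt8Aux.degIn_union ends hBQ v
    have h5 := hdeg₁ v
    have h6 := hdeg₂ v
    have h7 := hNb v
    omega
  have hcolC₁ : EdgeColorable ends (B ∪ M₁) k :=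
    Stmt8Aux.koenig ends hloop f hf k _ (hdegC M₁ hM₁sub fun v => (hMsplit v).1)
  have hcolC₂ : EdgeColorable ends (B ∪ (M \ M₁)) k :=
    Stmt8Aux.koenig ends hloop f hf k _ (hdegC (M \ M₁) hM₂sub fun v => (hMsplit v).2)
  have hle₁ := hnu_ge k _ hcolC₁
  have hle₂ := hnu_ge k _ hcolC₂
  -- cardinalities
  have hc₁ : (B ∪ M₁).card = B.card + M₁.card := Finset.card_union_of_disjoint hBM₁
  have hc₂ : (B ∪ (M \ M₁)).card = B.card + (M \ M₁).card := Finset.card_union_of_disjoint hBM₂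
  have hc₃ : (M \ M₁).card + M₁.card = M.card := Finset.card_sdiff_add_card_eq_card hM₁sub
  have hc₄ : M.card = P.card + Q.card := Finset.card_union_of_disjoint hdisjPQ
  have hc₅ : F₁.card = B.card + P.card := by rw [hF₁]; exact Finset.card_union_of_disjoint hBP
  have hc₆ : F₂.card = B.card + Q.card := by rw [hF₂]; exact Finset.card_union_of_disjoint hBQ
  omega
end
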